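/- Define the transfer Λ : 𝔐 → 𝔐 on the triangular compact set 𝔐 = ∏_{n≥1}{0,…,n−1} as follows: given t = (t_n) ∈ 𝔐, set d_1(t) = 0 and recursively d_{n+1}(t) = d_n(t) + 1 if t_{n+1} ≤ d_n(t) (position n+1 is 'special'), d_{n+1}(t) = d_n(t) otherwise; then Λ(t)_n = t_{n+1} if t_{n+1} ≤ d_n(t), and Λ(t)_n = t_{n+1} − 1 otherwise. Then for every sequence x : ℕ → [0,1] with pairwise distinct coordinates, Λ(J(x)) = J(Sx), where J(x) = (t_n(x))_{n≥1} with t_n(x) = #{k ≤ n : x_k < x_n} and S is the one-sided shift (Sx)_k = x_{k+1}. -/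

import Mathlib

open MeasureTheory unitInterval

/-- `tCode x n = #{k < n : x k < x n}` is, in 0-based indexing, the quantity
`t_{n+1}(x) = #{k ≤ n+1 : x_k < x_{n+1}}` of the paper; it takes values in `{0, 1, …, n}`. -/
noncomputable def tCode (x : ℕ → I) (n : ℕ) : ℕ :=
  ((Finset.range n).filter fun k => (x k : ℝ) < (x n : ℝ)).card

/-- The combinatorial encoding `J : [0,1]^ℕ → 𝔐 = ∏_n {0,…,n}`, `J(x) = (t_n(x))_n`. -/
noncomputable def JCode (x : ℕ → I) (n : ℕ) : Fin (n + 1) :=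
  ⟨tCode x n, Nat.lt_succ_of_le ((Finset.card_filter_le _ _).trans (Finset.card_range n).le)⟩

/-- The recursively defined sequence `d_n(t)` of the paper (in 0-based indexing,
`dM t m` is the paper's `d_{m+1}(t)`): `d_1(t) = 0`, and `d_{n+1}(t) = d_n(t) + 1` if
position `n+1` is special (`t_{n+1} ≤ d_n(t)`), `d_{n+1}(t) = d_n(t)` otherwise. -/
def dM (t : ∀ n : ℕ, Fin (n + 1)) : ℕ → ℕ
  | 0 => 0
  | n + 1 => if (t (n + 1) : ℕ) ≤ dM t n then dM t n + 1 else dM t n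

theorem dM_le (t : ∀ n : ℕ, Fin (n + 1)) : ∀ n, dM t n ≤ n
  | 0 => le_refl 0
  | n + 1 => by
    unfold dM
    split
    · exact Nat.succ_le_succ (dM_le t n)
    · exact (dM_le t n).trans (Nat.le_succ n)

/-- The transfer `Λ : 𝔐 → 𝔐` on the triangular compact set (in 0-based indexing,
`transferM t m` is the paper's `Λ(t)_{m+1}`): `Λ(t)_n = t_{n+1}` if `t_{n+1}` is special
(`t_{n+1} ≤ d_n(t)`), and `Λ(t)_n = t_{n+1} - 1` otherwise. -/
def transferM (t : ∀ n : ℕ, Fin (n + 1)) (m : ℕ) : Fin (m + 1) :=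
  if h : (t (m + 1) : ℕ) ≤ dM t m then
    ⟨(t (m + 1) : ℕ), Nat.lt_succ_of_le (h.trans (dM_le t m))⟩
  else
    ⟨(t (m + 1) : ℕ) - 1,
      Nat.lt_succ_of_le (Nat.sub_le_sub_right (Nat.lt_succ_iff.mp (t (m + 1)).isLt) 1)⟩


/-! ### Auxiliary lemmas -/

noncomputable def cIco (x : ℕ → I) (n : ℕ) : ℕ :=
  ((Finset.Ico 1 (n+1)).filter fun k => (x k : ℝ) < (x (n+1) : ℝ)).card

noncomputable def Dcnt (x : ℕ → I) (n : ℕ) : ℕ :=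
  ((Finset.Ico 1 (n+1)).filter fun k => (x k : ℝ) < (x 0 : ℝ)).card

lemma range_succ_eq' (n : ℕ) : Finset.range (n+1) = insert 0 (Finset.Ico 1 (n+1)) := by
  ext k; simp [Finset.mem_Ico, Nat.lt_succ_iff]; omega

lemma tCode_succ (x : ℕ → I) (n : ℕ) :
    tCode x (n+1) = (if (x 0 : ℝ) < (x (n+1) : ℝ) then 1 else 0) + cIco x n := by
  unfold tCode cIco
  rw [range_succ_eq', Finset.filter_insert]
  split
  · rw [Finset.card_insert_of_notMem (by simp [Finset.mem_Ico])]; omega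
  · simp

lemma cIco_eq (x : ℕ → I) (m : ℕ) : cIco x m = tCode (fun k => x (k+1)) m := by
  unfold tCode cIco
  have him : Finset.Ico 1 (m+1) = (Finset.range m).image (· + 1) := by
    ext k
    simp only [Finset.mem_Ico, Finset.mem_image, Finset.mem_range]
    constructor
    · rintro ⟨h1, h2⟩; exact ⟨k - 1, by omega, by omega⟩
    · rintro ⟨a, ha, rfl⟩; omega
  rw [him, Finset.filter_image,
    Finset.card_image_of_injective _ (fun a b h => by omega)]

lemma coe_ne_of_inj (x : ℕ → I) (hx : Function.Injective x) (n : ℕ) :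
    (x 0 : ℝ) ≠ (x (n+1) : ℝ) := by
  intro h
  exact (Nat.succ_ne_zero n).symm (hx (Subtype.coe_injective h))

lemma key_iff (x : ℕ → I) (hx : Function.Injective x) (n : ℕ) :
    tCode x (n+1) ≤ Dcnt x n ↔ (x (n+1) : ℝ) < (x 0 : ℝ) := by
  rcases lt_or_gt_of_ne (coe_ne_of_inj x hx n) with h | h
  · rw [tCode_succ, if_pos h]
    have : Dcnt x n ≤ cIco x n := by
      apply Finset.card_le_card
      apply Finset.monotone_filter_right
      intro k _ hk; exact lt_trans hk h
    constructor
    · intro hle; omega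
    · intro hlt; exact absurd hlt (not_lt.mpr h.le)
  · rw [tCode_succ, if_neg (not_lt.mpr h.le)]
    have : cIco x n ≤ Dcnt x n := by
      apply Finset.card_le_card
      apply Finset.monotone_filter_right
      intro k _ hk; exact lt_trans hk h
    simpa using ⟨fun _ => h, fun _ => this⟩

lemma dM_eq_Dcnt (x : ℕ → I) (hx : Function.Injective x) :
    ∀ n, dM (JCode x) n = Dcnt x n
  | 0 => by simp [dM, Dcnt]
  | n + 1 => by
    have ih := dM_eq_Dcnt x hx n
    have hD : Dcnt x (n+1) =
        (if (x (n+1) : ℝ) < (x 0 : ℝ) then 1 else 0) + Dcnt x n := by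
      unfold Dcnt
      have hins : Finset.Ico 1 (n+2) = insert (n+1) (Finset.Ico 1 (n+1)) := by
        ext k; simp [Finset.mem_Ico]; omega
      rw [hins, Finset.filter_insert]
      split
      · rw [Finset.card_insert_of_notMem (by simp [Finset.mem_Ico])]; omega
      · simp
    show dM (JCode x) (n+1) = _
    rw [dM, ih]
    have hcond : ((JCode x (n+1) : ℕ) ≤ Dcnt x n) ↔ (x (n+1) : ℝ) < (x 0 : ℝ) := by
      simpa [JCode] using key_iff x hx n
    by_cases h : (x (n+1) : ℝ) < (x 0 : ℝ)
    · rw [if_pos (hcond.mpr h), hD, if_pos h]; omega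
    · rw [if_neg (fun hc => h (hcond.mp hc)), hD, if_neg h]; omega

/-- The transfer `Λ` is the combinatorial image of the one-sided shift `S`:
`Λ(J(x)) = J(Sx)` for every sequence `x` in `[0,1]` with pairwise distinct coordinates. -/
theorem transferM_JCode (x : ℕ → I) (hx : Function.Injective x) :
    transferM (JCode x) = JCode (fun k => x (k + 1)) := by
  funext m
  apply Fin.ext
  have hd : dM (JCode x) m = Dcnt x m := dM_eq_Dcnt x hx m
  have hkey := key_iff x hx m
  show (transferM (JCode x) m : ℕ) = tCode (fun k => x (k+1)) m
  unfold transferM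
  split_ifs with h
  · have hsp : (x (m+1) : ℝ) < (x 0 : ℝ) := by
      apply hkey.mp
      simpa [JCode, hd] using h
    show (JCode x (m+1) : ℕ) = _
    rw [show ((JCode x (m+1) : ℕ)) = tCode x (m+1) from rfl,
      tCode_succ, if_neg (not_lt.mpr hsp.le), cIco_eq]
    omega
  · have hsp : ¬ (x (m+1) : ℝ) < (x 0 : ℝ) := by
      intro hc
      exact h (by simpa [JCode, hd] using hkey.mpr hc)
    have h0 : (x 0 : ℝ) < (x (m+1) : ℝ) :=
      lt_of_le_of_ne (not_lt.mp hsp) (coe_ne_of_inj x hx m)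
    show (JCode x (m+1) : ℕ) - 1 = _
    rw [show ((JCode x (m+1) : ℕ)) = tCode x (m+1) from rfl,
      tCode_succ, if_pos h0, cIco_eq]
    omega
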